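/- There is a universal constant C such that for every n ≥ 2, every N ≥ 1, and every n-point subset X of ℝ^N, there exist m ≤ C·log n and a mapping f : X → ℝ^m such that for all x, y ∈ X: ‖f(x) − f(y)‖₁ ≤ ‖x − y‖₂ ≤ 2·‖f(x) − f(y)‖₁. -/

import Mathlib

/-- The ℓ₁ norm of a vector in `ℝ^m`. -/
noncomputable def l1norm {m : ℕ} (x : Fin m → ℝ) : ℝ := ∑ i, |x i|

namespace L2L1

noncomputable def sgn (b : Bool) : ℝ := if b then 1 else -1

noncomputable def S {N : ℕ} (u : Fin N → ℝ) (r : Fin N → Bool) : ℝ := ∑ j, sgn (r j) * u j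

lemma sum_cons {α : Type*} [Fintype α] {k : ℕ} (G : (Fin (k+1) → α) → ℝ) :
    ∑ r : Fin (k+1) → α, G r = ∑ a : α, ∑ r : Fin k → α, G (Fin.cons a r) := by
  rw [← (Fintype.sum_equiv (Fin.consEquiv fun _ => α) (fun p => G (Fin.cons p.1 p.2)) G (fun p => rfl))]
  exact Fintype.sum_prod_type _

lemma S_cons {N : ℕ} (u : Fin (N+1) → ℝ) (b : Bool) (r : Fin N → Bool) :
    S u (Fin.cons b r) = sgn b * u 0 + S (fun j => u j.succ) r := by
  simp [S, Fin.sum_univ_succ]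

lemma sum_pi_prod {α : Type*} [Fintype α] {k : ℕ} (g : α → ℝ) :
    ∑ ω : Fin k → α, ∏ i, g (ω i) = (∑ a, g a) ^ k := by
  induction k with
  | zero => simp
  | succ k ih =>
    rw [sum_cons (fun r => ∏ i, g (r i))]
    simp only [Fin.prod_univ_succ, Fin.cons_zero, Fin.cons_succ]
    rw [← Finset.sum_mul_sum]
    simp [ih, pow_succ, mul_comm]

lemma R2 {N : ℕ} (u : Fin N → ℝ) :
    ∑ r : Fin N → Bool, (S u r) ^ 2 = 2 ^ N * ∑ j, u j ^ 2 := by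
  induction N with
  | zero => simp [S]
  | succ N ih =>
    rw [sum_cons (fun r => (S u r) ^ 2)]
    rw [Fintype.sum_bool]
    simp only [S_cons, sgn, reduceIte, Bool.false_eq_true, if_false, one_mul, neg_one_mul]
    have : ∀ r : Fin N → Bool,
        (u 0 + S (fun j => u j.succ) r) ^ 2 + (-u 0 + S (fun j => u j.succ) r) ^ 2
        = 2 * u 0 ^ 2 + 2 * (S (fun j => u j.succ) r) ^ 2 := fun r => by ring
    rw [← Finset.sum_add_distrib, Finset.sum_congr rfl (fun r _ => this r),
      Finset.sum_add_distrib, Finset.sum_const, ← Finset.mul_sum, ih (fun j => u j.succ)]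
    simp [Fin.sum_univ_succ, Finset.card_univ]
    push_cast
    ring

lemma R4 {N : ℕ} (u : Fin N → ℝ) :
    ∑ r : Fin N → Bool, (S u r) ^ 4 ≤ 3 * 2 ^ N * (∑ j, u j ^ 2) ^ 2 := by
  induction N with
  | zero => simp [S]
  | succ N ih =>
    rw [sum_cons (fun r => (S u r) ^ 4), Fintype.sum_bool]
    simp only [S_cons, sgn, reduceIte, Bool.false_eq_true, if_false, one_mul, neg_one_mul]
    set a := u 0 with ha
    set v := fun j : Fin N => u j.succ with hv
    have key : ∀ r : Fin N → Bool,
        (a + S v r) ^ 4 + (-a + S v r) ^ 4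
        = 2 * a ^ 4 + 12 * a ^ 2 * (S v r) ^ 2 + 2 * (S v r) ^ 4 := fun r => by ring
    rw [← Finset.sum_add_distrib, Finset.sum_congr rfl (fun r _ => key r)]
    rw [Finset.sum_add_distrib, Finset.sum_add_distrib, Finset.sum_const, ← Finset.mul_sum,
      ← Finset.mul_sum, R2]
    have hQ : (0:ℝ) ≤ ∑ j, v j ^ 2 := Finset.sum_nonneg fun j _ => sq_nonneg _
    have h2 : (0:ℝ) < 2 ^ N := by positivity
    have hsum : ∑ j : Fin (N+1), u j ^ 2 = a ^ 2 + ∑ j, v j ^ 2 := by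
      simp [Fin.sum_univ_succ, ha, hv]
    rw [hsum]
    have ihv := ih v
    simp only [Finset.card_univ, Fintype.card_fun, Fintype.card_bool, Fintype.card_fin,
      nsmul_eq_mul]
    push_cast
    rw [show (2:ℝ)^(N+1) = 2 * 2^N from by ring]
    nlinarith [ihv, h2, sq_nonneg a, mul_nonneg h2.le (sq_nonneg (a^2)), mul_nonneg (mul_nonneg h2.le (sq_nonneg a)) hQ]

lemma RM {N : ℕ} (u : Fin N → ℝ) (t : ℝ) :
    ∑ r : Fin N → Bool, Real.exp (t * S u r) ≤ 2 ^ N * Real.exp (t ^ 2 * (∑ j, u j ^ 2) / 2) := by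
  induction N with
  | zero => simp [S]
  | succ N ih =>
    rw [sum_cons (fun r => Real.exp (t * S u r)), Fintype.sum_bool]
    simp only [S_cons, sgn, reduceIte, Bool.false_eq_true, if_false, one_mul, neg_one_mul]
    set a := u 0 with ha
    set v := fun j : Fin N => u j.succ with hv
    have key : ∀ r : Fin N → Bool,
        Real.exp (t * (a + S v r)) + Real.exp (t * (-a + S v r))
        = (Real.exp (t*a) + Real.exp (-(t*a))) * Real.exp (t * S v r) := fun r => by
      rw [add_mul, ← Real.exp_add, ← Real.exp_add]; ring_nf
    rw [← Finset.sum_add_distrib, Finset.sum_congr rfl (fun r _ => key r), ← Finset.mul_sum]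
    have hcosh : Real.exp (t*a) + Real.exp (-(t*a)) ≤ 2 * Real.exp ((t*a)^2/2) := by
      have := Real.cosh_le_exp_half_sq (t*a)
      rw [Real.cosh_eq] at this
      linarith
    have hpos : (0:ℝ) ≤ Real.exp (t*a) + Real.exp (-(t*a)) := by positivity
    calc (Real.exp (t*a) + Real.exp (-(t*a))) * ∑ r : Fin N → Bool, Real.exp (t * S v r)
        ≤ (2 * Real.exp ((t*a)^2/2)) * (2 ^ N * Real.exp (t ^ 2 * (∑ j, v j ^ 2) / 2)) := by
          apply mul_le_mul hcosh (ih v) (Finset.sum_nonneg fun r _ => (Real.exp_pos _).le) (by positivity)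
      _ = 2 ^ (N+1) * Real.exp (t ^ 2 * (∑ j : Fin (N+1), u j ^ 2) / 2) := by
          have hsum : ∑ j : Fin (N+1), u j ^ 2 = a ^ 2 + ∑ j, v j ^ 2 := by
            simp [Fin.sum_univ_succ, ha, hv]
          rw [hsum, mul_comm (2 * Real.exp ((t*a)^2/2)), mul_assoc, mul_comm (Real.exp ((t^2 * ∑ j, v j ^2)/2)), mul_assoc, ← Real.exp_add]
          rw [show (2:ℝ)^N * (2 * Real.exp ((t*a)^2/2 + (t^2 * ∑ j, v j ^2)/2)) = 2^(N+1) * Real.exp ((t*a)^2/2 + (t^2 * ∑ j, v j ^2)/2) by ring]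
          congr 1
          ring



/-- card of the row space -/
lemma card_rows (N : ℕ) : (Fintype.card (Fin N → Bool) : ℝ) = 2 ^ N := by
  simp [Fintype.card_fun]

noncomputable def A {N : ℕ} (u : Fin N → ℝ) : ℝ := ∑ r : Fin N → Bool, |S u r|

lemma A_nonneg {N : ℕ} (u : Fin N → ℝ) : 0 ≤ A u :=
  Finset.sum_nonneg fun r _ => abs_nonneg _

lemma A_le {N : ℕ} (u : Fin N → ℝ) (hu : ∑ j, u j ^ 2 = 1) : A u ≤ 2 ^ N := by
  have h := sq_sum_le_card_mul_sum_sq (s := (Finset.univ : Finset (Fin N → Bool)))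
    (f := fun r => |S u r|)
  simp only [sq_abs] at h
  rw [R2 u, hu, mul_one, Finset.card_univ] at h
  have hcard : ((Fintype.card (Fin N → Bool)) : ℝ) = 2 ^ N := card_rows N
  rw [hcard] at h
  have hA : A u ^ 2 ≤ 2 ^ N * 2 ^ N := h
  nlinarith [A_nonneg u, hA, pow_pos (show (0:ℝ) < 2 by norm_num) N]

lemma ptwise (s : ℝ) : (43/50) * s ^ 2 - (19/200) * s ^ 4 ≤ |s| := by
  rcases abs_cases s with ⟨h1, _⟩ | ⟨h1, _⟩ <;> rw [h1] <;>
    nlinarith [sq_nonneg (s - 1737/1000), sq_nonneg (s + 1737/1000), sq_nonneg s,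
      mul_nonneg (abs_nonneg s) (sq_nonneg (s - 1737/1000)),
      mul_nonneg (abs_nonneg s) (sq_nonneg (s + 1737/1000)),
      abs_nonneg s, neg_abs_le s, le_abs_self s]

lemma A_ge {N : ℕ} (u : Fin N → ℝ) (hu : ∑ j, u j ^ 2 = 1) : (23/40) * 2 ^ N ≤ A u := by
  have h : ∑ r : Fin N → Bool, ((43/50) * (S u r) ^ 2 - (19/200) * (S u r) ^ 4) ≤ A u :=
    Finset.sum_le_sum fun r _ => ptwise (S u r)
  rw [Finset.sum_sub_distrib, ← Finset.mul_sum, ← Finset.mul_sum, R2 u, hu, mul_one] at h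
  have h4 := R4 u
  rw [hu] at h4
  nlinarith [h, h4]

/-- centered exponential moment of a single row -/
lemma row_mgf {N : ℕ} (u : Fin N → ℝ) (hu : ∑ j, u j ^ 2 = 1) (t : ℝ) :
    ∑ r : Fin N → Bool, Real.exp (t * (|S u r| - A u / 2 ^ N)) ≤ 2 ^ N * Real.exp (t ^ 2) := by
  have hK : (0:ℝ) < 2 ^ N := by positivity
  -- Jensen step
  have jensen : ∀ x : ℝ, Real.exp (t * (x - A u / 2 ^ N)) ≤
      ∑ r' : Fin N → Bool, ((2:ℝ) ^ N)⁻¹ * Real.exp (t * (x - |S u r'|)) := by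
    intro x
    have hw : ∀ r' ∈ (Finset.univ : Finset (Fin N → Bool)), (0:ℝ) ≤ (2 ^ N)⁻¹ := by
      intro _ _; positivity
    have hw1 : ∑ _r' : Fin N → Bool, ((2:ℝ) ^ N)⁻¹ = 1 := by
      rw [Finset.sum_const, Finset.card_univ, nsmul_eq_mul, card_rows N]
      field_simp
    have hj := convexOn_exp.map_sum_le (t := (Finset.univ : Finset (Fin N → Bool)))
      (w := fun _ => ((2:ℝ) ^ N)⁻¹) (p := fun r' => t * (x - |S u r'|)) hw hw1
      (fun _ _ => Set.mem_univ _)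
    simp only [smul_eq_mul] at hj
    have harg : (∑ r' : Fin N → Bool, ((2:ℝ)^N)⁻¹ * (t * (x - |S u r'|)))
        = t * (x - A u / 2 ^ N) := by
      have : ∀ r' : Fin N → Bool, ((2:ℝ)^N)⁻¹ * (t * (x - |S u r'|))
          = t * x * (2^N)⁻¹ - t * (2^N)⁻¹ * |S u r'| := fun r' => by ring
      rw [Finset.sum_congr rfl (fun r' _ => this r'), Finset.sum_sub_distrib,
        Finset.sum_const, ← Finset.mul_sum, Finset.card_univ, nsmul_eq_mul, card_rows N]
      unfold A
      field_simp
    rw [harg] at hj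
    exact hj
  have step1 : ∑ r : Fin N → Bool, Real.exp (t * (|S u r| - A u / 2 ^ N)) ≤
      (2 ^ N)⁻¹ * ∑ r : Fin N → Bool, ∑ r' : Fin N → Bool,
        Real.exp (t * (|S u r| - |S u r'|)) := by
    rw [Finset.mul_sum]
    apply Finset.sum_le_sum
    intro r _
    rw [Finset.mul_sum]
    exact jensen (|S u r|)
  -- symmetrization
  set P := ∑ r : Fin N → Bool, Real.exp (t * S u r) with hP
  set Q := ∑ r : Fin N → Bool, Real.exp (-t * S u r) with hQ
  have expand : ∀ r r' : Fin N → Bool, Real.cosh (t * (S u r - S u r')) =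
      (Real.exp (t * S u r) * Real.exp (-t * S u r')
        + Real.exp (-t * S u r) * Real.exp (t * S u r')) / 2 := by
    intro r r'
    rw [Real.cosh_eq, ← Real.exp_add, ← Real.exp_add]
    congr 3 <;> ring
  set D := ∑ r : Fin N → Bool, ∑ r' : Fin N → Bool,
      Real.exp (t * (|S u r| - |S u r'|)) with hD
  have hswap : D = ∑ r : Fin N → Bool, ∑ r' : Fin N → Bool,
      Real.exp (-(t * (|S u r| - |S u r'|))) := by
    rw [hD, Finset.sum_comm]
    exact Finset.sum_congr rfl fun r _ => Finset.sum_congr rfl fun r' _ => by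
      congr 1; ring
  have hcoshD : D = ∑ r : Fin N → Bool, ∑ r' : Fin N → Bool,
      Real.cosh (t * (|S u r| - |S u r'|)) := by
    have h2 : D + D = ∑ r : Fin N → Bool, ∑ r' : Fin N → Bool,
        (Real.exp (t * (|S u r| - |S u r'|)) + Real.exp (-(t * (|S u r| - |S u r'|)))) := by
      nth_rw 2 [hswap]
      nth_rw 1 [hD]
      rw [← Finset.sum_add_distrib]
      exact Finset.sum_congr rfl fun r _ => (Finset.sum_add_distrib).symm
    have h3 : ∑ r : Fin N → Bool, ∑ r' : Fin N → Bool,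
        Real.cosh (t * (|S u r| - |S u r'|)) = (D + D) / 2 := by
      rw [h2]
      rw [Finset.sum_div]
      exact Finset.sum_congr rfl fun r _ => by
        rw [Finset.sum_div]
        exact Finset.sum_congr rfl fun r' _ => by rw [Real.cosh_eq]
    rw [h3]; ring
  have hDle : D ≤ P * Q := by
    rw [hcoshD]
    have hmono : ∀ r r' : Fin N → Bool, Real.cosh (t * (|S u r| - |S u r'|)) ≤
        Real.cosh (t * (S u r - S u r')) := by
      intro r r'
      rw [Real.cosh_le_cosh, abs_mul, abs_mul]
      exact mul_le_mul_of_nonneg_left (abs_abs_sub_abs_le_abs_sub _ _) (abs_nonneg t)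
    have hprod : ∑ r : Fin N → Bool, ∑ r' : Fin N → Bool,
        Real.cosh (t * (S u r - S u r')) = (P * Q + Q * P) / 2 := by
      have inner : ∀ r : Fin N → Bool, ∑ r' : Fin N → Bool,
          Real.cosh (t * (S u r - S u r'))
          = (Real.exp (t * S u r) * Q + Real.exp (-t * S u r) * P) / 2 := by
        intro r
        rw [Finset.sum_congr rfl (fun r' _ => expand r r'), ← Finset.sum_div]
        congr 1
        rw [Finset.sum_add_distrib, ← Finset.mul_sum, ← Finset.mul_sum]
      rw [Finset.sum_congr rfl (fun r _ => inner r), ← Finset.sum_div]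
      congr 1
      rw [Finset.sum_add_distrib, ← Finset.sum_mul, ← Finset.sum_mul]
    calc ∑ r : Fin N → Bool, ∑ r' : Fin N → Bool, Real.cosh (t * (|S u r| - |S u r'|))
        ≤ ∑ r : Fin N → Bool, ∑ r' : Fin N → Bool, Real.cosh (t * (S u r - S u r')) :=
          Finset.sum_le_sum fun r _ => Finset.sum_le_sum fun r' _ => hmono r r'
      _ = (P * Q + Q * P) / 2 := hprod
      _ = P * Q := by ring
  have hPle : P ≤ 2 ^ N * Real.exp (t ^ 2 / 2) := by
    have := RM u t
    rw [hu, mul_one] at this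
    exact this
  have hQle : Q ≤ 2 ^ N * Real.exp (t ^ 2 / 2) := by
    have := RM u (-t)
    rw [hu, mul_one, show (-t) ^ 2 = t ^ 2 from by ring] at this
    exact this
  have hPnn : 0 ≤ P := Finset.sum_nonneg fun _ _ => (Real.exp_pos _).le
  calc ∑ r : Fin N → Bool, Real.exp (t * (|S u r| - A u / 2 ^ N))
      ≤ (2 ^ N)⁻¹ * D := step1
    _ ≤ (2 ^ N)⁻¹ * (P * Q) := by
        apply mul_le_mul_of_nonneg_left hDle (by positivity)
    _ ≤ (2 ^ N)⁻¹ * ((2 ^ N * Real.exp (t ^ 2 / 2)) * (2 ^ N * Real.exp (t ^ 2 / 2))) := by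
        apply mul_le_mul_of_nonneg_left _ (by positivity)
        apply mul_le_mul hPle hQle (Finset.sum_nonneg fun _ _ => (Real.exp_pos _).le) (by positivity)
    _ = 2 ^ N * Real.exp (t ^ 2) := by
        have he : Real.exp (t ^ 2 / 2) * Real.exp (t ^ 2 / 2) = Real.exp (t ^ 2) := by
          rw [← Real.exp_add]; norm_num
        rw [← he]
        field_simp


noncomputable def T {N m : ℕ} (u : Fin N → ℝ) (ω : Fin m → Fin N → Bool) : ℝ :=
  ∑ i, |S u (ω i)|

lemma chernoff {N m : ℕ} (u : Fin N → ℝ) (hu : ∑ j, u j ^ 2 = 1) (t : ℝ) :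
    ∑ ω : Fin m → Fin N → Bool, Real.exp (t * (T u ω - m * (A u / 2 ^ N)))
      ≤ 2 ^ (N * m) * Real.exp (m * t ^ 2) := by
  have key : ∀ ω : Fin m → Fin N → Bool,
      Real.exp (t * (T u ω - m * (A u / 2 ^ N)))
        = ∏ i, Real.exp (t * (|S u (ω i)| - A u / 2 ^ N)) := by
    intro ω
    rw [← Real.exp_sum]
    congr 1
    rw [← Finset.mul_sum, Finset.sum_sub_distrib, Finset.sum_const, Finset.card_univ,
      Fintype.card_fin, nsmul_eq_mul, T]
  rw [Finset.sum_congr rfl (fun ω _ => key ω)]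
  rw [sum_pi_prod (fun r => Real.exp (t * (|S u r| - A u / 2 ^ N)))]
  have hrow := row_mgf u hu t
  have hnn : (0:ℝ) ≤ ∑ r : Fin N → Bool, Real.exp (t * (|S u r| - A u / 2 ^ N)) :=
    Finset.sum_nonneg fun _ _ => (Real.exp_pos _).le
  calc (∑ r : Fin N → Bool, Real.exp (t * (|S u r| - A u / 2 ^ N))) ^ m
      ≤ (2 ^ N * Real.exp (t ^ 2)) ^ m := pow_le_pow_left₀ hnn hrow m
    _ = 2 ^ (N * m) * Real.exp (m * t ^ 2) := by
        rw [mul_pow, ← pow_mul, ← Real.exp_nat_mul]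

/-- generic counting/Markov lemma -/
lemma count_exp {β : Type*} [Fintype β] (g : β → ℝ) (hg : ∀ b, 0 ≤ g b) (E : Finset β)
    (c B : ℝ) (hc : ∀ b ∈ E, Real.exp c ≤ g b) (hB : ∑ b, g b ≤ B) :
    (E.card : ℝ) ≤ B * Real.exp (-c) := by
  have h1 : (E.card : ℝ) * Real.exp c ≤ ∑ b ∈ E, g b := by
    calc (E.card : ℝ) * Real.exp c = ∑ _b ∈ E, Real.exp c := by
          rw [Finset.sum_const, nsmul_eq_mul]
      _ ≤ ∑ b ∈ E, g b := Finset.sum_le_sum hc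
  have h2 : ∑ b ∈ E, g b ≤ ∑ b, g b :=
    Finset.sum_le_sum_of_subset_of_nonneg (Finset.subset_univ E) (fun b _ _ => hg b)
  have h3 : (E.card : ℝ) * Real.exp c ≤ B := le_trans h1 (le_trans h2 hB)
  have hec : (0:ℝ) < Real.exp c := Real.exp_pos c
  rw [Real.exp_neg, ← div_eq_mul_inv]
  exact (le_div_iff₀ hec).mpr h3


lemma bad_count {N m : ℕ} (u : Fin N → ℝ) (hu : ∑ j, u j ^ 2 = 1)
    (E : Finset (Fin m → Fin N → Bool))
    (hE : ∀ ω ∈ E, ¬((107/200 : ℝ) * m ≤ T u ω ∧ T u ω ≤ (26/25) * m)) :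
    (E.card : ℝ) ≤ 2 * 2 ^ (N * m) * Real.exp (-(m : ℝ) / 2500) := by
  classical
  have hK : (0:ℝ) < 2 ^ N := by positivity
  set μ := A u / 2 ^ N with hμ
  have hμle : μ ≤ 1 := by
    rw [hμ, div_le_one hK]; exact A_le u hu
  have hμge : (23/40:ℝ) ≤ μ := by
    rw [hμ, le_div_iff₀ hK]
    calc (23/40:ℝ) * 2 ^ N = (23/40) * 2 ^ N := rfl
      _ ≤ A u := A_ge u hu
  set E₁ := E.filter (fun ω => T u ω < (107/200:ℝ) * m) with hE₁
  set E₂ := E.filter (fun ω => (26/25:ℝ) * m < T u ω) with hE₂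
  have hsub : E ⊆ E₁ ∪ E₂ := by
    intro ω hω
    have := hE ω hω
    rw [not_and_or, not_le, not_le] at this
    rcases this with h | h
    · exact Finset.mem_union_left _ (Finset.mem_filter.mpr ⟨hω, h⟩)
    · exact Finset.mem_union_right _ (Finset.mem_filter.mpr ⟨hω, h⟩)
  have hcards : (E.card : ℝ) ≤ (E₁.card : ℝ) + (E₂.card : ℝ) := by
    have := le_trans (Finset.card_le_card hsub) (Finset.card_union_le E₁ E₂)
    exact_mod_cast this
  have hbound : ∀ (t : ℝ), t ^ 2 = 1/2500 →
      ∀ (F : Finset (Fin m → Fin N → Bool)),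
      (∀ ω ∈ F, (m:ℝ)/1250 ≤ t * (T u ω - m * μ)) →
      (F.card : ℝ) ≤ 2 ^ (N * m) * Real.exp (-(m:ℝ)/2500) := by
    intro t ht F hF
    have := count_exp (fun ω => Real.exp (t * (T u ω - m * μ)))
      (fun ω => (Real.exp_pos _).le) F ((m:ℝ)/1250)
      (2 ^ (N * m) * Real.exp (m * t ^ 2))
      (fun ω hω => Real.exp_le_exp.mpr (hF ω hω))
      (chernoff u hu t)
    calc (F.card : ℝ) ≤ 2 ^ (N * m) * Real.exp (↑m * t ^ 2) * Real.exp (-(↑m / 1250)) := this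
      _ = 2 ^ (N * m) * Real.exp (-(m:ℝ)/2500) := by
          rw [mul_assoc, ← Real.exp_add, ht]
          congr 2
          ring
  have h1 : (E₁.card : ℝ) ≤ 2 ^ (N * m) * Real.exp (-(m:ℝ)/2500) := by
    apply hbound (-(1/50)) (by norm_num)
    intro ω hω
    rw [hE₁, Finset.mem_filter] at hω
    have hT := hω.2
    nlinarith [hμge, hT, Nat.cast_nonneg (α := ℝ) m]
  have h2 : (E₂.card : ℝ) ≤ 2 ^ (N * m) * Real.exp (-(m:ℝ)/2500) := by
    apply hbound (1/50) (by norm_num)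
    intro ω hω
    rw [hE₂, Finset.mem_filter] at hω
    have hT := hω.2
    nlinarith [hμle, hT, Nat.cast_nonneg (α := ℝ) m]
  calc (E.card : ℝ) ≤ (E₁.card : ℝ) + (E₂.card : ℝ) := hcards
    _ ≤ 2 ^ (N * m) * Real.exp (-(m:ℝ)/2500) + 2 ^ (N * m) * Real.exp (-(m:ℝ)/2500) :=
        add_le_add h1 h2
    _ = 2 * 2 ^ (N * m) * Real.exp (-(m : ℝ) / 2500) := by ring


lemma S_scale {N : ℕ} (d : ℝ) (u : Fin N → ℝ) (r : Fin N → Bool) :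
    S (fun j => d * u j) r = d * S u r := by
  unfold S
  rw [Finset.mul_sum]
  exact Finset.sum_congr rfl fun j _ => by ring

end L2L1

/-- Every `n`-point subset of `ℓ₂^N` embeds into `ℓ₁^{O(log n)}` so that the ℓ₁ distance
is within a factor 2 below the Euclidean distance: there is a universal constant `C` such
that for every `n ≥ 2`, `N ≥ 1` and `n`-point set `X ⊆ ℝ^N` there are `m ≤ C·log n` and
`f : X → ℝ^m` with `‖f x − f y‖₁ ≤ ‖x − y‖₂ ≤ 2‖f x − f y‖₁`. -/
theorem l2_into_l1_embedding :
    ∃ C : ℝ, 0 < C ∧ ∀ n N : ℕ, 2 ≤ n → 1 ≤ N →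
      ∀ X : Finset (EuclideanSpace ℝ (Fin N)), X.card = n →
        ∃ m : ℕ, (m : ℝ) ≤ C * Real.log n ∧
          ∃ f : EuclideanSpace ℝ (Fin N) → Fin m → ℝ,
            ∀ x ∈ X, ∀ y ∈ X,
              l1norm (f x - f y) ≤ ‖x - y‖ ∧ ‖x - y‖ ≤ 2 * l1norm (f x - f y) := by
  classical
  refine ⟨8628, by norm_num, ?_⟩
  intro n N hn _hN X hX
  set L := Real.log n with hLdef
  have hn2 : (2:ℝ) ≤ (n:ℝ) := by exact_mod_cast hn
  have hL2 : Real.log 2 ≤ L := Real.log_le_log (by norm_num) hn2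
  have hlog2 : (0.6931471803:ℝ) < Real.log 2 := Real.log_two_gt_d9
  have hLpos : (0:ℝ) < L := lt_of_lt_of_le (by linarith) hL2
  set m := ⌈(8626:ℝ) * L⌉₊ with hmdef
  have hmge : (8626:ℝ) * L ≤ (m:ℝ) := Nat.le_ceil _
  have hmle : (m:ℝ) ≤ 8628 * L := by
    have h1 : (m:ℝ) < 8626 * L + 1 := Nat.ceil_lt_add_one (by positivity)
    nlinarith
  have hm0 : 0 < m := by
    rw [hmdef, Nat.ceil_pos]
    positivity
  have hm0' : (0:ℝ) < (m:ℝ) := by exact_mod_cast hm0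
  refine ⟨m, by norm_num [hmle], ?_⟩
  -- pairs and unit vectors
  set Pairs := (X ×ˢ X).filter (fun p => p.1 ≠ p.2) with hPairs
  set U : EuclideanSpace ℝ (Fin N) × EuclideanSpace ℝ (Fin N) → Fin N → ℝ :=
    fun p j => (p.1 j - p.2 j) / ‖p.1 - p.2‖ with hU
  have norm_sq : ∀ x y : EuclideanSpace ℝ (Fin N),
      ‖x - y‖ ^ 2 = ∑ j, (x j - y j) ^ 2 := by
    intro x y
    rw [EuclideanSpace.norm_eq]
    rw [Real.sq_sqrt (Finset.sum_nonneg fun j _ => sq_nonneg _)]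
    exact Finset.sum_congr rfl fun j _ => by
      rw [show (x - y) j = x j - y j from rfl, Real.norm_eq_abs, sq_abs]
  have hunit : ∀ p ∈ Pairs, ∑ j, (U p) j ^ 2 = 1 := by
    intro p hp
    rw [hPairs, Finset.mem_filter] at hp
    have hne : p.1 - p.2 ≠ 0 := sub_ne_zero.mpr hp.2
    have hd : (0:ℝ) < ‖p.1 - p.2‖ := norm_pos_iff.mpr hne
    have : ∀ j, (U p) j ^ 2 = (p.1 j - p.2 j) ^ 2 / ‖p.1 - p.2‖ ^ 2 := fun j => by
      rw [hU]; ring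
    rw [Finset.sum_congr rfl fun j _ => this j, ← Finset.sum_div, ← norm_sq p.1 p.2]
    field_simp
  -- bad sets
  set Bad : (EuclideanSpace ℝ (Fin N) × EuclideanSpace ℝ (Fin N)) →
      Finset (Fin m → Fin N → Bool) :=
    fun p => Finset.univ.filter (fun ω =>
      ¬((107/200 : ℝ) * m ≤ L2L1.T (U p) ω ∧ L2L1.T (U p) ω ≤ (26/25) * m)) with hBad
  set badSet := Pairs.biUnion Bad with hbadSet
  have hbad_card : (badSet.card : ℝ) ≤
      (n:ℝ)^2 * (2 * 2 ^ (N * m) * Real.exp (-(m : ℝ) / 2500)) := by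
    have h1 : badSet.card ≤ ∑ p ∈ Pairs, (Bad p).card := Finset.card_biUnion_le
    have h2 : (∑ p ∈ Pairs, ((Bad p).card:ℝ)) ≤
        ∑ _p ∈ Pairs, (2 * 2 ^ (N * m) * Real.exp (-(m : ℝ) / 2500)) := by
      apply Finset.sum_le_sum
      intro p hp
      apply L2L1.bad_count (U p) (hunit p hp)
      intro ω hω
      rw [hBad, Finset.mem_filter] at hω
      exact hω.2
    rw [Finset.sum_const, nsmul_eq_mul] at h2
    have h3 : (Pairs.card : ℝ) ≤ (n:ℝ)^2 := by
      have : Pairs.card ≤ (X ×ˢ X).card := Finset.card_le_card (Finset.filter_subset _ _)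
      rw [Finset.card_product, hX] at this
      calc (Pairs.card : ℝ) ≤ (n * n : ℕ) := by exact_mod_cast this
        _ = (n:ℝ)^2 := by push_cast; ring
    have h1' : (badSet.card : ℝ) ≤ ∑ p ∈ Pairs, ((Bad p).card:ℝ) := by exact_mod_cast h1
    have hpos : (0:ℝ) ≤ 2 * 2 ^ (N * m) * Real.exp (-(m : ℝ) / 2500) := by positivity
    calc (badSet.card : ℝ) ≤ (Pairs.card : ℝ) * (2 * 2 ^ (N * m) * Real.exp (-(m : ℝ) / 2500)) :=
          le_trans h1' h2
      _ ≤ (n:ℝ)^2 * (2 * 2 ^ (N * m) * Real.exp (-(m : ℝ) / 2500)) :=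
          mul_le_mul_of_nonneg_right h3 hpos
  -- numeric bound
  have hnum : (n:ℝ)^2 * (2 * 2 ^ (N * m) * Real.exp (-(m : ℝ) / 2500)) < 2 ^ (N * m) := by
    have hexp : 2 * (n:ℝ)^2 < Real.exp ((m:ℝ)/2500) := by
      have hstep : 2 * L + 1 ≤ (m:ℝ)/2500 := by nlinarith
      have : Real.exp (2 * L + 1) ≤ Real.exp ((m:ℝ)/2500) := Real.exp_le_exp.mpr hstep
      have hexp2L : Real.exp (2 * L + 1) = (n:ℝ)^2 * Real.exp 1 := by
        rw [show 2 * L + 1 = L + L + 1 from by ring, Real.exp_add, Real.exp_add,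
          hLdef, Real.exp_log (by positivity)]
        ring
      have he : (2:ℝ) < Real.exp 1 := lt_trans (by norm_num) Real.exp_one_gt_d9
      have hnpos : (0:ℝ) < (n:ℝ)^2 := by positivity
      nlinarith [hnpos]
    have h2p : (0:ℝ) < 2 ^ (N * m) := by positivity
    have hepos : (0:ℝ) < Real.exp ((m:ℝ)/2500) := Real.exp_pos _
    rw [show (-(m : ℝ) / 2500) = -((m:ℝ)/2500) from by ring, Real.exp_neg]
    rw [show (n:ℝ)^2 * (2 * 2 ^ (N * m) * (Real.exp ((m:ℝ)/2500))⁻¹)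
        = (2 * (n:ℝ)^2) * (2 ^ (N * m) * (Real.exp ((m:ℝ)/2500))⁻¹) from by ring]
    calc (2 * (n:ℝ)^2) * (2 ^ (N * m) * (Real.exp ((m:ℝ)/2500))⁻¹)
        < Real.exp ((m:ℝ)/2500) * (2 ^ (N * m) * (Real.exp ((m:ℝ)/2500))⁻¹) := by
          apply mul_lt_mul_of_pos_right hexp
          positivity
      _ = 2 ^ (N * m) := by field_simp
  -- a good ω exists
  have hcardΩ : ((Fintype.card (Fin m → Fin N → Bool)) : ℝ) = 2 ^ (N * m) := by
    simp [Fintype.card_fun]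
    rw [← pow_mul]
  obtain ⟨ω, hω⟩ : ∃ ω : Fin m → Fin N → Bool, ω ∉ badSet := by
    by_contra h
    push_neg at h
    have hsub : (Finset.univ : Finset (Fin m → Fin N → Bool)) ⊆ badSet :=
      fun ω _ => h ω
    have := Finset.card_le_card hsub
    rw [Finset.card_univ] at this
    have : ((Fintype.card (Fin m → Fin N → Bool)) : ℝ) ≤ (badSet.card : ℝ) := by
      exact_mod_cast this
    rw [hcardΩ] at this
    linarith [lt_of_le_of_lt hbad_card hnum]
  have hgood : ∀ p ∈ Pairs, (107/200 : ℝ) * m ≤ L2L1.T (U p) ω ∧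
      L2L1.T (U p) ω ≤ (26/25) * m := by
    intro p hp
    by_contra hcon
    exact hω (Finset.mem_biUnion.mpr ⟨p, hp,
      Finset.mem_filter.mpr ⟨Finset.mem_univ _, hcon⟩⟩)
  -- the embedding
  refine ⟨fun x i => (25 / (26 * (m:ℝ))) * ∑ j, L2L1.sgn (ω i j) * x j, ?_⟩
  intro x hx y hy
  by_cases hxy : x = y
  · subst hxy
    simp [l1norm, sub_self]
  · have hp : (x, y) ∈ Pairs := by
      rw [hPairs, Finset.mem_filter]
      exact ⟨Finset.mem_product.mpr ⟨hx, hy⟩, hxy⟩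
    have hne : x - y ≠ 0 := sub_ne_zero.mpr hxy
    have hd : (0:ℝ) < ‖x - y‖ := norm_pos_iff.mpr hne
    set d := ‖x - y‖ with hdd
    have hrepr : ∀ j, x j - y j = d * (U (x, y)) j := by
      intro j
      rw [hU]
      field_simp
      rfl
    have hSv : ∀ r : Fin N → Bool,
        L2L1.S (fun j => x j - y j) r = d * L2L1.S (U (x, y)) r := by
      intro r
      rw [show (fun j => x j - y j) = (fun j => d * (U (x,y)) j) from funext hrepr]
      exact L2L1.S_scale d _ r
    have hl1 : l1norm ((fun i => (25 / (26 * (m:ℝ))) * ∑ j, L2L1.sgn (ω i j) * x j)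
        - (fun i => (25 / (26 * (m:ℝ))) * ∑ j, L2L1.sgn (ω i j) * y j))
        = (25 / (26 * (m:ℝ))) * d * L2L1.T (U (x, y)) ω := by
      unfold l1norm
      rw [L2L1.T, Finset.mul_sum]
      apply Finset.sum_congr rfl
      intro i _
      rw [show ((fun i => (25 / (26 * (m:ℝ))) * ∑ j, L2L1.sgn (ω i j) * x j)
          - (fun i => (25 / (26 * (m:ℝ))) * ∑ j, L2L1.sgn (ω i j) * y j)) i
          = (25 / (26 * (m:ℝ))) * ((∑ j, L2L1.sgn (ω i j) * x j)
            - ∑ j, L2L1.sgn (ω i j) * y j) from by simp [Pi.sub_apply]; ring]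
      rw [show (∑ j, L2L1.sgn (ω i j) * x j) - ∑ j, L2L1.sgn (ω i j) * y j
          = L2L1.S (fun j => x j - y j) (ω i) from by
        rw [L2L1.S, ← Finset.sum_sub_distrib]
        exact Finset.sum_congr rfl fun j _ => by ring]
      rw [hSv (ω i), abs_mul, abs_mul]
      rw [abs_of_pos hd, abs_of_pos (show (0:ℝ) < 25 / (26 * (m:ℝ)) from by positivity)]
      ring
    rw [hl1]
    obtain ⟨hTlo, hThi⟩ := hgood (x, y) hp
    constructor
    · calc (25 / (26 * (m:ℝ))) * d * L2L1.T (U (x, y)) ω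
          ≤ (25 / (26 * (m:ℝ))) * d * ((26/25) * m) := by
            apply mul_le_mul_of_nonneg_left hThi (by positivity)
        _ = d := by field_simp
    · have : d * 1 ≤ d * (2 * (25 / (26 * (m:ℝ))) * ((107/200) * m)) := by
        apply mul_le_mul_of_nonneg_left _ hd.le
        rw [show 2 * (25 / (26 * (m:ℝ))) * ((107/200) * m) = (107 * 25 * 2 / (26 * 200)) * (m / m) from by ring]
        rw [div_self (ne_of_gt hm0')]
        norm_num
      calc d = d * 1 := by ring
        _ ≤ d * (2 * (25 / (26 * (m:ℝ))) * ((107/200) * m)) := this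
        _ ≤ d * (2 * (25 / (26 * (m:ℝ))) * L2L1.T (U (x, y)) ω) := by
            apply mul_le_mul_of_nonneg_left _ hd.le
            apply mul_le_mul_of_nonneg_left hTlo (by positivity)
        _ = 2 * ((25 / (26 * (m:ℝ))) * d * L2L1.T (U (x, y)) ω) := by ring
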